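/- Corrector decrease transfer: let k | n, c = C(n−1,k−1), and let Y* be a collection of positive definite k×k matrices indexed by k-subsets of [n]. Let Y_0 = {(1/c)·I_{k×k}}_{|J|=k}, let X_ℓ ≻ 0 and X_{ℓ+1} = X_ℓ^{1/2} Ψ(Y*) X_ℓ^{1/2}. Then c·(f^{SDP}(X_ℓ) − f^{SDP}(X_{ℓ+1})) ≥ f^{FW(k)}(Y_0) − f^{FW(k)}(Y*), where f^{SDP}(X) = −log det X and f^{FW(k)}(Y) = −Σ_{|J|=k} log det Y_J. -/

import Mathlib

open Matrix Finset

/-- Embed a matrix indexed by a `k`-subset `J` of `Fin n` as the principal submatrix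
indexed by `J` of an `n × n` matrix, with zeros elsewhere (the map `S ↦ S^{→n}`). -/
def Matrix.embed {n : ℕ} (J : Finset (Fin n)) (S : Matrix ↥J ↥J ℝ) :
    Matrix (Fin n) (Fin n) ℝ := fun i j =>
  if hi : i ∈ J then if hj : j ∈ J then S ⟨i, hi⟩ ⟨j, hj⟩ else 0 else 0

/-- The factor-width-`k` cone `FW_n(k)`: matrices expressible as a finite sum of
rank-one terms `x xᵀ` where each `x` has at most `k` nonzero entries. -/
def FW (n k : ℕ) : Set (Matrix (Fin n) (Fin n) ℝ) :=
  {X | ∃ (N : ℕ) (v : Fin N → (Fin n → ℝ)),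
    (∀ i, (Finset.univ.filter (fun j => v i j ≠ 0)).card ≤ k) ∧
    X = ∑ i, Matrix.vecMulVec (v i) (v i)}

/-- The old Mathlib `Matrix.PosSemidef.sqrt` (removed upstream), restated with its old definition. -/
noncomputable def Matrix.PosSemidef.sqrt {m : Type*} [Fintype m]
    [DecidableEq m] {A : Matrix m m ℝ} (hA : A.PosSemidef) : Matrix m m ℝ :=
  hA.1.eigenvectorUnitary.1 * diagonal ((√·) ∘ hA.1.eigenvalues) *
    (star hA.1.eigenvectorUnitary : Matrix m m ℝ)

lemma Matrix.PosSemidef.posSemidef_sqrt {m : Type*} [Fintype m]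
    [DecidableEq m] {A : Matrix m m ℝ} (hA : A.PosSemidef) : hA.sqrt.PosSemidef := by
  have h := (Matrix.PosSemidef.diagonal (R := ℝ) (d := (√·) ∘ hA.1.eigenvalues)
    (fun i => Real.sqrt_nonneg _)).mul_mul_conjTranspose_same hA.1.eigenvectorUnitary.1
  unfold Matrix.PosSemidef.sqrt
  simpa [Matrix.star_eq_conjTranspose] using h

lemma Matrix.PosSemidef.sqrt_mul_self {m : Type*} [Fintype m]
    [DecidableEq m] {A : Matrix m m ℝ} (hA : A.PosSemidef) : hA.sqrt * hA.sqrt = A := by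
  have hU : (star hA.1.eigenvectorUnitary : Matrix m m ℝ) * hA.1.eigenvectorUnitary.1 = 1 :=
    Unitary.coe_star_mul_self _
  have hD : diagonal ((√·) ∘ hA.1.eigenvalues) * diagonal ((√·) ∘ hA.1.eigenvalues)
      = diagonal (RCLike.ofReal ∘ hA.1.eigenvalues) := by
    rw [diagonal_mul_diagonal]; congr 1; funext i
    simp [Real.mul_self_sqrt (hA.eigenvalues_nonneg i)]
  conv_rhs => rw [hA.1.spectral_theorem, Unitary.conjStarAlgAut_apply]
  unfold Matrix.PosSemidef.sqrt
  rw [show ∀ U D V : Matrix m m ℝ, U * D * V * (U * D * V) = U * (D * (V * U) * D) * V by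
    intros; simp only [Matrix.mul_assoc], hU, Matrix.mul_one, hD]


private lemma psd_det_nonneg {d : ℕ} {A : Matrix (Fin d) (Fin d) ℝ} (hA : A.PosSemidef) :
    0 ≤ A.det := by
  rw [hA.isHermitian.det_eq_prod_eigenvalues]
  exact Finset.prod_nonneg fun i _ => by simpa using hA.eigenvalues_nonneg i

private lemma posdef_of_psd_det_ne_zero {d : ℕ} {A : Matrix (Fin d) (Fin d) ℝ}
    (hA : A.PosSemidef) (h : A.det ≠ 0) : A.PosDef := by
  refine Matrix.PosDef.of_dotProduct_mulVec_pos hA.isHermitian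
    fun x hx => lt_of_le_of_ne (hA.dotProduct_mulVec_nonneg x) fun he => hx ?_
  have h0 : A *ᵥ x = 0 := (hA.dotProduct_mulVec_zero_iff x).mp he.symm
  have := congrArg (fun v => A⁻¹ *ᵥ v) h0
  simpa [Matrix.mulVec_mulVec, Matrix.nonsing_inv_mul A (isUnit_iff_ne_zero.mpr h)] using this

private lemma posdef_smul {d : ℕ} {A : Matrix (Fin d) (Fin d) ℝ} (hA : A.PosDef)
    {c : ℝ} (hc : 0 < c) : (c • A).PosDef := by
  refine Matrix.PosDef.of_dotProduct_mulVec_pos ?_ fun x hx => ?_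
  · unfold Matrix.IsHermitian
    rw [conjTranspose_smul, hA.isHermitian.eq]; simp
  · rw [Matrix.smul_mulVec, dotProduct_smul, smul_eq_mul]
    exact mul_pos hc (hA.dotProduct_mulVec_pos hx)

private lemma psd_smul {d : ℕ} {A : Matrix (Fin d) (Fin d) ℝ} (hA : A.PosSemidef)
    {c : ℝ} (hc : 0 ≤ c) : (c • A).PosSemidef := by
  refine Matrix.PosSemidef.of_dotProduct_mulVec_nonneg ?_ fun x => ?_
  · unfold Matrix.IsHermitian
    rw [conjTranspose_smul, hA.isHermitian.eq]; simp
  · rw [Matrix.smul_mulVec, dotProduct_smul, smul_eq_mul]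
    exact mul_nonneg hc (hA.dotProduct_mulVec_nonneg x)

private lemma det_log_concave2 {d : ℕ} {A B : Matrix (Fin d) (Fin d) ℝ}
    (hA : A.PosDef) (hB : B.PosDef) {a b : ℝ} (ha : 0 < a) (hb : 0 < b) (hab : a + b = 1) :
    A.det ^ a * B.det ^ b ≤ (a • A + b • B).det := by
  classical
  set R := hA.posSemidef.sqrt with hRdef
  have hRpsd : R.PosSemidef := hA.posSemidef.posSemidef_sqrt
  have hRR : R * R = A := hA.posSemidef.sqrt_mul_self
  have hdetA : 0 < A.det := hA.det_pos
  have hdetR2 : R.det * R.det = A.det := by rw [← det_mul, hRR]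
  have hdetR : 0 < R.det := by
    rcases lt_or_eq_of_le (psd_det_nonneg hRpsd) with h | h
    · exact h
    · exfalso; rw [← h, mul_zero] at hdetR2; exact hdetA.ne hdetR2
  have hRunit : IsUnit R.det := isUnit_iff_ne_zero.mpr hdetR.ne'
  have hRinv : R * R⁻¹ = 1 := Matrix.mul_nonsing_inv R hRunit
  have hRinv' : R⁻¹ * R = 1 := Matrix.nonsing_inv_mul R hRunit
  have hRherm : R.IsHermitian := hRpsd.isHermitian
  have hRinvherm : (R⁻¹).IsHermitian := by
    unfold Matrix.IsHermitian
    rw [Matrix.conjTranspose_nonsing_inv, hRherm.eq]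
  have hCpsd : (R⁻¹ * B * R⁻¹).PosSemidef := by
    have := hB.posSemidef.conjTranspose_mul_mul_same R⁻¹
    rwa [hRinvherm.eq] at this
  have hdetC : (R⁻¹ * B * R⁻¹).det = B.det / A.det := by
    rw [det_mul, det_mul, Matrix.det_nonsing_inv, Ring.inverse_eq_inv', ← hdetR2]
    rw [eq_div_iff (by nlinarith : R.det * R.det ≠ 0)]
    field_simp
  have hdetCpos : 0 < (R⁻¹ * B * R⁻¹).det := by
    rw [hdetC]; exact div_pos hB.det_pos hdetA
  have hC : (R⁻¹ * B * R⁻¹).PosDef := posdef_of_psd_det_ne_zero hCpsd hdetCpos.ne'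
  generalize hCC : R⁻¹ * B * R⁻¹ = C at hC hCpsd hdetC hdetCpos
  -- key identity
  have hRCR : R * C * R = B := by
    rw [← hCC,
      show R * (R⁻¹ * B * R⁻¹) * R = (R * R⁻¹) * B * (R⁻¹ * R) by
        simp only [Matrix.mul_assoc],
      hRinv, hRinv', Matrix.one_mul, Matrix.mul_one]
  have hkey : a • A + b • B = R * (a • (1 : Matrix (Fin d) (Fin d) ℝ) + b • C) * R := by
    rw [Matrix.mul_add, Matrix.add_mul, Matrix.mul_smul, Matrix.smul_mul, Matrix.mul_one,
      hRR, Matrix.mul_smul, Matrix.smul_mul, hRCR]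
  -- spectral theorem for C
  have hCh : C.IsHermitian := hC.isHermitian
  have hspec := hCh.spectral_theorem
  rw [Unitary.conjStarAlgAut_apply] at hspec
  set U : Matrix (Fin d) (Fin d) ℝ := (hCh.eigenvectorUnitary : Matrix (Fin d) (Fin d) ℝ) with hUdef
  have hUU : U * star U = 1 := Matrix.mem_unitaryGroup_iff.mp hCh.eigenvectorUnitary.2
  have hUU' : star U * U = 1 := Matrix.mem_unitaryGroup_iff'.mp hCh.eigenvectorUnitary.2
  have hdiag : a • (1 : Matrix (Fin d) (Fin d) ℝ) +
      b • diagonal (RCLike.ofReal ∘ hCh.eigenvalues)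
      = diagonal (fun i => a + b * hCh.eigenvalues i) := by
    rw [Matrix.smul_one_eq_diagonal]
    have h2 : (diagonal (RCLike.ofReal ∘ hCh.eigenvalues) : Matrix (Fin d) (Fin d) ℝ)
        = diagonal hCh.eigenvalues := by
      congr 1
    rw [h2, ← Matrix.diagonal_smul, Matrix.diagonal_add]
    simp [smul_eq_mul]
  have hmid : a • (1 : Matrix (Fin d) (Fin d) ℝ) + b • C
      = U * diagonal (fun i => a + b * hCh.eigenvalues i) * star U := by
    rw [← hdiag, Matrix.mul_add, Matrix.add_mul, Matrix.mul_smul, Matrix.smul_mul,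
      Matrix.mul_one, hUU, Matrix.mul_smul, Matrix.smul_mul, ← hspec]
  have hdetmid : (a • (1 : Matrix (Fin d) (Fin d) ℝ) + b • C).det
      = ∏ i, (a + b * hCh.eigenvalues i) := by
    rw [hmid, det_mul, det_mul, mul_comm, ← mul_assoc, ← det_mul, hUU', det_one, one_mul,
      det_diagonal]
  have hev : ∀ i, 0 < hCh.eigenvalues i := hC.eigenvalues_pos
  have hprod : C.det ^ b ≤ ∏ i, (a + b * hCh.eigenvalues i) := by
    have hdetCeig : C.det = ∏ i, hCh.eigenvalues i := by
      rw [hCh.det_eq_prod_eigenvalues]; norm_num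
    rw [hdetCeig, ← Real.finset_prod_rpow _ _ (fun i _ => (hev i).le)]
    refine Finset.prod_le_prod (fun i _ => Real.rpow_nonneg (hev i).le b) (fun i _ => ?_)
    have := Real.geom_mean_le_arith_mean2_weighted ha.le hb.le zero_le_one (hev i).le hab
    simpa using this
  have hdetfull : (a • A + b • B).det
      = A.det * (a • (1 : Matrix (Fin d) (Fin d) ℝ) + b • C).det := by
    rw [hkey, det_mul, det_mul, mul_comm, ← mul_assoc, ← hdetR2]
  rw [hdetfull, hdetmid]
  have hstep : A.det ^ a * B.det ^ b = A.det * C.det ^ b := by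
    rw [hdetC, Real.div_rpow hB.det_pos.le hdetA.le,
      show (a : ℝ) = 1 - b by linarith, Real.rpow_sub hdetA, Real.rpow_one]
    field_simp
  rw [hstep]
  exact mul_le_mul_of_nonneg_left hprod hdetA.le

private lemma psd_sum {d : ℕ} {ι : Type*} (s : Finset ι) (A : ι → Matrix (Fin d) (Fin d) ℝ)
    (hA : ∀ i ∈ s, (A i).PosSemidef) : (∑ i ∈ s, A i).PosSemidef := by
  classical
  induction s using Finset.induction_on with
  | empty => simpa using Matrix.PosSemidef.zero
  | @insert a t h ih =>
    rw [Finset.sum_insert h]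
    exact (hA a (Finset.mem_insert_self a t)).add
      (ih fun i hi => hA i (Finset.mem_insert_of_mem hi))

private lemma posdef_sum {d : ℕ} {ι : Type*} (s : Finset ι) (hs : s.Nonempty)
    (A : ι → Matrix (Fin d) (Fin d) ℝ)
    (hA : ∀ i ∈ s, (A i).PosDef) : (∑ i ∈ s, A i).PosDef := by
  classical
  obtain ⟨a, ha⟩ := hs
  rw [← Finset.add_sum_erase s A ha]
  exact (hA a ha).add_posSemidef
    (psd_sum _ _ fun i hi => (hA i (Finset.mem_of_mem_erase hi)).posSemidef)

private lemma det_log_concave {d : ℕ} {ι : Type*} (s : Finset ι)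
    (w : ι → ℝ) (A : ι → Matrix (Fin d) (Fin d) ℝ)
    (hw : ∀ i ∈ s, 0 < w i) (hw1 : ∑ i ∈ s, w i = 1) (hA : ∀ i ∈ s, (A i).PosDef) :
    ∏ i ∈ s, (A i).det ^ w i ≤ (∑ i ∈ s, w i • A i).det := by
  classical
  induction s using Finset.induction_on generalizing w with
  | empty => simp at hw1
  | @insert a t h ih =>
    have hwa : 0 < w a := hw a (Finset.mem_insert_self _ _)
    have hsum : w a + ∑ i ∈ t, w i = 1 := by rwa [Finset.sum_insert h] at hw1
    rcases Finset.eq_empty_or_nonempty t with rfl | htne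
    · simp only [Finset.sum_empty, add_zero] at hsum
      simp [hsum, Real.rpow_one]
    · have hb : 0 < ∑ i ∈ t, w i :=
        Finset.sum_pos (fun i hi => hw i (Finset.mem_insert_of_mem hi)) htne
      set b := ∑ i ∈ t, w i with hbdef
      set B := ∑ i ∈ t, (w i / b) • A i with hBdef
      have hBpd : B.PosDef := by
        refine posdef_sum t htne _ fun i hi => posdef_smul (hA i (Finset.mem_insert_of_mem hi))
          (div_pos (hw i (Finset.mem_insert_of_mem hi)) hb)
      have hIH : ∏ i ∈ t, (A i).det ^ (w i / b) ≤ B.det := by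
        refine ih (fun i => w i / b) (fun i hi => div_pos (hw i (Finset.mem_insert_of_mem hi)) hb) ?_
          (fun i hi => hA i (Finset.mem_insert_of_mem hi))
        rw [← Finset.sum_div, div_self hb.ne']
      have hsplit : ∑ i ∈ insert a t, w i • A i = w a • A a + b • B := by
        rw [Finset.sum_insert h, hBdef, Finset.smul_sum]
        congr 1
        refine Finset.sum_congr rfl fun i hi => ?_
        rw [smul_smul, mul_div_cancel₀ _ hb.ne']
      have h2 := det_log_concave2 (hA a (Finset.mem_insert_self _ _)) hBpd hwa hb hsum
      rw [hsplit, Finset.prod_insert h]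
      refine le_trans (mul_le_mul_of_nonneg_left ?_ (Real.rpow_nonneg
        (hA a (Finset.mem_insert_self _ _)).det_pos.le _)) h2
      -- ∏ i ∈ t, det ^ w i ≤ B.det ^ b
      have hBnn : 0 ≤ B.det := le_trans (Finset.prod_nonneg fun i hi =>
        Real.rpow_nonneg (hA i (Finset.mem_insert_of_mem hi)).det_pos.le _) hIH
      calc ∏ i ∈ t, (A i).det ^ w i
          = ∏ i ∈ t, ((A i).det ^ (w i / b)) ^ b := by
            refine Finset.prod_congr rfl fun i hi => ?_
            rw [← Real.rpow_mul (hA i (Finset.mem_insert_of_mem hi)).det_pos.le,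
              div_mul_cancel₀ _ hb.ne']
        _ = (∏ i ∈ t, (A i).det ^ (w i / b)) ^ b := by
            rw [Real.finset_prod_rpow _ _ (fun i hi => Real.rpow_nonneg
              (hA i (Finset.mem_insert_of_mem hi)).det_pos.le _)]
        _ ≤ B.det ^ b := Real.rpow_le_rpow (Finset.prod_nonneg fun i hi =>
            Real.rpow_nonneg (hA i (Finset.mem_insert_of_mem hi)).det_pos.le _) hIH hb.le

private def Jset {n k q : ℕ} (e : Fin n ≃ Fin k × Fin q) (σ : Equiv.Perm (Fin n)) (i : Fin q) :
    Finset (Fin n) := Finset.univ.image (fun j : Fin k => σ (e.symm (j, i)))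

private lemma mem_Jset {n k q : ℕ} {e : Fin n ≃ Fin k × Fin q} {σ : Equiv.Perm (Fin n)}
    {i : Fin q} {x : Fin n} : x ∈ Jset e σ i ↔ (e (σ.symm x)).2 = i := by
  simp only [Jset, Finset.mem_image, Finset.mem_univ, true_and]
  constructor
  · rintro ⟨j, rfl⟩; simp
  · intro h
    exact ⟨(e (σ.symm x)).1, by rw [← h, Prod.mk.eta, Equiv.symm_apply_apply,
      Equiv.apply_symm_apply]⟩

private lemma card_Jset {n k q : ℕ} (e : Fin n ≃ Fin k × Fin q) (σ : Equiv.Perm (Fin n))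
    (i : Fin q) : (Jset e σ i).card = k := by
  have hinj : Function.Injective (fun j : Fin k => σ (e.symm (j, i))) := by
    intro a b hab
    simpa using congrArg (fun z => (e (σ.symm z)).1) hab
  rw [Jset, Finset.card_image_of_injective _ hinj, Finset.card_univ, Fintype.card_fin]

private lemma Jset_image {n k q : ℕ} (e : Fin n ≃ Fin k × Fin q) (σ g : Equiv.Perm (Fin n))
    (i : Fin q) : (Jset e σ i).image g = Jset e (σ.trans g) i := by
  rw [Jset, Jset, Finset.image_image]
  rfl

private lemma fiber_card_const {n k q : ℕ} (e : Fin n ≃ Fin k × Fin q)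
    {J J' : Finset (Fin n)} (hJ : J.card = k) (hJ' : J'.card = k) :
    ((univ : Finset (Equiv.Perm (Fin n) × Fin q)).filter (fun p => Jset e p.1 p.2 = J)).card =
    ((univ : Finset (Equiv.Perm (Fin n) × Fin q)).filter (fun p => Jset e p.1 p.2 = J')).card := by
  classical
  have hc1 : Fintype.card {x // x ∈ J} = Fintype.card {x // x ∈ J'} := by
    rw [Fintype.card_coe, Fintype.card_coe, hJ, hJ']
  have hc2 : Fintype.card {x : Fin n // ¬ x ∈ J} = Fintype.card {x : Fin n // ¬ x ∈ J'} := by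
    rw [Fintype.card_subtype_compl, Fintype.card_subtype_compl, Fintype.card_coe,
      Fintype.card_coe, hJ, hJ']
  set e1 : {x // x ∈ J} ≃ {x // x ∈ J'} := Fintype.equivOfCardEq hc1 with he1
  set e2 : {x : Fin n // ¬ x ∈ J} ≃ {x : Fin n // ¬ x ∈ J'} := Fintype.equivOfCardEq hc2 with he2
  set g : Equiv.Perm (Fin n) := Equiv.subtypeCongr e1 e2 with hg
  have hg1 : ∀ x ∈ J, g x ∈ J' := by
    intro x hx
    have : g x = ↑(e1 ⟨x, hx⟩) := by
      simp [hg, Equiv.subtypeCongr, Equiv.sumCompl_symm_apply_of_pos hx]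
    rw [this]
    exact (e1 ⟨x, hx⟩).2
  have hginj : Function.Injective g := g.injective
  have himg : J.image g = J' := by
    refine Finset.eq_of_subset_of_card_le (fun y hy => ?_) ?_
    · obtain ⟨x, hx, rfl⟩ := Finset.mem_image.mp hy
      exact hg1 x hx
    · rw [Finset.card_image_of_injective _ hginj, hJ, hJ']
  have himg' : J'.image g.symm = J := by
    rw [← himg, Finset.image_image]
    have : (⇑g.symm ∘ ⇑g) = id := by funext z; simp
    rw [this, Finset.image_id]
  refine Finset.card_bij' (fun p _ => (p.1.trans g, p.2)) (fun p _ => (p.1.trans g.symm, p.2))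
    ?_ ?_ ?_ ?_
  · intro p hp
    rw [Finset.mem_filter] at hp ⊢
    refine ⟨Finset.mem_univ _, ?_⟩
    rw [← Jset_image, hp.2, himg]
  · intro p hp
    rw [Finset.mem_filter] at hp ⊢
    refine ⟨Finset.mem_univ _, ?_⟩
    rw [← Jset_image, hp.2, himg']
  · intro p hp
    ext z
    · simp
    · simp
  · intro p hp
    ext z
    · simp
    · simp

private lemma sum_pairs {n k q : ℕ} (e : Fin n ≃ Fin k × Fin q) {M : Type*} [AddCommMonoid M]
    (F : Finset (Fin n) → M) (m : ℕ)
    (hm : ∀ J : Finset (Fin n), J.card = k →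
      ((univ : Finset (Equiv.Perm (Fin n) × Fin q)).filter
        (fun p => Jset e p.1 p.2 = J)).card = m) :
    ∑ p : Equiv.Perm (Fin n) × Fin q, F (Jset e p.1 p.2)
      = ∑ J ∈ univ.filter (fun J : Finset (Fin n) => J.card = k), m • F J := by
  classical
  rw [← Finset.sum_fiberwise_of_maps_to
      (g := fun p : Equiv.Perm (Fin n) × Fin q => Jset e p.1 p.2)
      (t := univ.filter fun J : Finset (Fin n) => J.card = k)
      (fun p _ => by simp [card_Jset]) (fun p => F (Jset e p.1 p.2))]
  refine Finset.sum_congr rfl fun J hJ => ?_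
  have hJk : J.card = k := (Finset.mem_filter.mp hJ).2
  have : ∀ p ∈ (univ : Finset (Equiv.Perm (Fin n) × Fin q)).filter
      (fun p => Jset e p.1 p.2 = J), F (Jset e p.1 p.2) = F J := by
    intro p hp
    rw [(Finset.mem_filter.mp hp).2]
  rw [Finset.sum_congr rfl this, Finset.sum_const, hm J hJk]

private lemma card_filter_card_eq (n k : ℕ) :
    ((univ : Finset (Finset (Fin n))).filter (fun J => J.card = k)).card = n.choose k := by
  have h : (univ : Finset (Finset (Fin n))).filter (fun J => J.card = k)
      = Finset.powersetCard k (univ : Finset (Fin n)) := by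
    rw [Finset.powersetCard_eq_filter, Finset.powerset_univ]
  rw [h, Finset.card_powersetCard, Finset.card_univ, Fintype.card_fin]

private noncomputable def uEquiv {n k q : ℕ} (e : Fin n ≃ Fin k × Fin q)
    (σ : Equiv.Perm (Fin n)) (i : Fin q) : Fin k ≃ {x // x ∈ Jset e σ i} :=
  Equiv.ofBijective (fun j => ⟨σ (e.symm (j, i)), by
      rw [mem_Jset]; simp⟩) (by
    rw [Fintype.bijective_iff_injective_and_card]
    constructor
    · intro a b hab
      have := congrArg (fun z : {x // x ∈ Jset e σ i} => (e (σ.symm z.1)).1) hab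
      simpa using this
    · rw [Fintype.card_coe, card_Jset, Fintype.card_fin])

private lemma uEquiv_apply {n k q : ℕ} (e : Fin n ≃ Fin k × Fin q)
    (σ : Equiv.Perm (Fin n)) (i : Fin q) (j : Fin k) :
    (uEquiv e σ i j : Fin n) = σ (e.symm (j, i)) := rfl

private lemma D_block {n k q : ℕ} (e : Fin n ≃ Fin k × Fin q) (σ : Equiv.Perm (Fin n))
    (Y : (J : Finset (Fin n)) → Matrix ↥J ↥J ℝ) :
    (∑ i : Fin q, Matrix.embed (Jset e σ i) (Y (Jset e σ i)))
    = (Matrix.blockDiagonal (fun i => (Y (Jset e σ i)).submatrix (uEquiv e σ i)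
        (uEquiv e σ i))).submatrix (fun x => e (σ.symm x)) (fun x => e (σ.symm x)) := by
  classical
  ext x y
  rw [Matrix.sum_apply]
  rw [Finset.sum_eq_single (e (σ.symm x)).2]
  rotate_left
  · intro i _ hi
    have hx : x ∉ Jset e σ i := by rw [mem_Jset]; exact fun h => hi h.symm
    rw [Matrix.embed, dif_neg hx]
  · intro h
    exact absurd (Finset.mem_univ _) h
  · have hx : x ∈ Jset e σ (e (σ.symm x)).2 := by rw [mem_Jset]
    rw [Matrix.submatrix_apply, Matrix.blockDiagonal_apply, Matrix.embed, dif_pos hx]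
    by_cases hy : (e (σ.symm x)).2 = (e (σ.symm y)).2
    · have hy' : y ∈ Jset e σ (e (σ.symm x)).2 := by rw [mem_Jset, hy]
      rw [dif_pos hy', if_pos hy, Matrix.submatrix_apply]
      congr 1
      · refine Subtype.ext ?_
        rw [uEquiv_apply, Prod.mk.eta, Equiv.symm_apply_apply, Equiv.apply_symm_apply]
      · refine Subtype.ext ?_
        rw [uEquiv_apply]
        conv_rhs => rw [hy, Prod.mk.eta]
        show y = _
        rw [Equiv.symm_apply_apply, Equiv.apply_symm_apply]
    · have hy' : y ∉ Jset e σ (e (σ.symm x)).2 := by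
        rw [mem_Jset]; exact fun h => hy h.symm
      rw [dif_neg hy', if_neg hy]

private lemma posdef_submatrix_equiv {d m : Type*} [Fintype d] [DecidableEq d] [Fintype m]
    [DecidableEq m] {M : Matrix d d ℝ} (hM : M.PosDef) (f : m ≃ d) :
    (M.submatrix f f).PosDef := by
  refine Matrix.PosDef.of_dotProduct_mulVec_pos (hM.isHermitian.submatrix f) fun x hx => ?_
  have h1 : (M.submatrix f f) *ᵥ x = (M *ᵥ (x ∘ f.symm)) ∘ f :=
    Matrix.submatrix_mulVec_equiv M x (⇑f) f
  rw [h1]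
  have h2 : star x ⬝ᵥ ((M *ᵥ (x ∘ ⇑f.symm)) ∘ ⇑f)
      = star (x ∘ ⇑f.symm) ⬝ᵥ (M *ᵥ (x ∘ ⇑f.symm)) := by
    rw [dotProduct, dotProduct]
    refine Fintype.sum_equiv f _ _ fun i => ?_
    simp
  rw [h2]
  refine hM.dotProduct_mulVec_pos fun h0 => hx ?_
  funext i
  have := congrFun h0 (f i)
  simpa using this

private lemma posdef_blockDiagonal {p r : Type*} [Fintype p] [DecidableEq p] [Fintype r]
    [DecidableEq r] {T : r → Matrix p p ℝ} (hT : ∀ i, (T i).PosDef) :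
    (Matrix.blockDiagonal T).PosDef := by
  classical
  refine Matrix.PosDef.of_dotProduct_mulVec_pos ?_ fun x hx => ?_
  · unfold Matrix.IsHermitian
    rw [Matrix.blockDiagonal_conjTranspose]
    exact congrArg _ (funext fun i => (hT i).isHermitian.eq)
  · have hform : star x ⬝ᵥ (Matrix.blockDiagonal T) *ᵥ x
        = ∑ i : r, star (fun a => x (a, i)) ⬝ᵥ (T i) *ᵥ (fun a => x (a, i)) := by
      rw [dotProduct, Fintype.sum_prod_type]
      rw [Finset.sum_comm]
      refine Finset.sum_congr rfl fun i _ => ?_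
      rw [dotProduct]
      refine Finset.sum_congr rfl fun a _ => ?_
      congr 1
      rw [Matrix.mulVec, dotProduct, Fintype.sum_prod_type, Matrix.mulVec, dotProduct]
      rw [Finset.sum_comm]
      rw [Finset.sum_eq_single i]
      · refine Finset.sum_congr rfl fun b _ => ?_
        rw [Matrix.blockDiagonal_apply, if_pos rfl]
      · intro j _ hj
        refine Finset.sum_eq_zero fun b _ => ?_
        rw [Matrix.blockDiagonal_apply, if_neg (fun h => hj h.symm), zero_mul]
      · intro h; exact absurd (Finset.mem_univ _) h
    rw [hform]
    obtain ⟨⟨a0, i0⟩, ha0⟩ : ∃ z, x z ≠ 0 := by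
      by_contra h
      push_neg at h
      exact hx (funext h)
    refine Finset.sum_pos' (fun i _ => (hT i).posSemidef.dotProduct_mulVec_nonneg _) ⟨i0, Finset.mem_univ _, ?_⟩
    exact (hT i0).dotProduct_mulVec_pos fun h => ha0 (congrFun h a0)

/-- corrector decrease transfer:
`c·(f^{SDP}(X_ℓ) − f^{SDP}(X_{ℓ+1})) ≥ f^{FW(k)}(Y_0) − f^{FW(k)}(Y*)`,
where `X_{ℓ+1} = X_ℓ^{1/2} Ψ(Y*) X_ℓ^{1/2}`, `c = C(n−1,k−1)` and
`Y_0` is the collection with `Y_J = (1/c)·I`. -/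
theorem corrector_decrease_transfer {n k : ℕ} (hk : 0 < k) (hdvd : k ∣ n)
    (Ystar : (J : Finset (Fin n)) → Matrix ↥J ↥J ℝ)
    (hY : ∀ J : Finset (Fin n), J.card = k → (Ystar J).PosDef)
    (Xl : Matrix (Fin n) (Fin n) ℝ) (hXl : Xl.PosDef)
    (Xnext : Matrix (Fin n) (Fin n) ℝ)
    (hXnext : Xnext = hXl.posSemidef.sqrt *
        (∑ J ∈ Finset.univ.filter (fun J : Finset (Fin n) => J.card = k),
          Matrix.embed J (Ystar J)) * hXl.posSemidef.sqrt) :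
    (Nat.choose (n - 1) (k - 1) : ℝ) *
        ((-Real.log Xl.det) - (-Real.log Xnext.det)) ≥
      (-∑ J ∈ Finset.univ.filter (fun J : Finset (Fin n) => J.card = k),
          Real.log (((Nat.choose (n - 1) (k - 1) : ℝ))⁻¹ • (1 : Matrix ↥J ↥J ℝ)).det)
      - (-∑ J ∈ Finset.univ.filter (fun J : Finset (Fin n) => J.card = k),
          Real.log (Ystar J).det) := by
  classical
  rcases Nat.eq_zero_or_pos n with hn | hn
  · subst hn
    have hSempty : (univ : Finset (Finset (Fin 0))).filter (fun J => J.card = k) = ∅ := by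
      rw [Finset.filter_eq_empty_iff]
      intro J _
      have hJ0 : J = ∅ := Finset.eq_empty_of_forall_notMem (fun x hx => Fin.elim0 x)
      subst hJ0
      simp
      omega
    rw [hSempty]
    have h1 : Xl.det = 1 := Matrix.det_fin_zero
    have h2 : Xnext.det = 1 := Matrix.det_fin_zero
    rw [h1, h2]
    simp
  -- main case
  set cN : ℕ := Nat.choose (n - 1) (k - 1) with hcN
  set S : Finset (Finset (Fin n)) := univ.filter (fun J : Finset (Fin n) => J.card = k) with hS
  set q : ℕ := n / k with hqdef
  have hkq : n = k * q := (Nat.mul_div_cancel' hdvd).symm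
  have hq : 0 < q := Nat.div_pos (Nat.le_of_dvd hn hdvd) hk
  set e : Fin n ≃ Fin k × Fin q := (finCongr hkq).trans finProdFinEquiv.symm with he
  set m : ℕ := ((univ : Finset (Equiv.Perm (Fin n) × Fin q)).filter
      (fun p => Jset e p.1 p.2 = Jset e 1 ⟨0, hq⟩)).card with hm
  have hmJ : ∀ J : Finset (Fin n), J.card = k →
      ((univ : Finset (Equiv.Perm (Fin n) × Fin q)).filter
        (fun p => Jset e p.1 p.2 = J)).card = m :=
    fun J hJ => fiber_card_const e hJ (card_Jset e 1 ⟨0, hq⟩)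
  -- counting identities
  have hScn : S.card = n.choose k := by rw [hS]; exact card_filter_card_eq n k
  have hcount : n.factorial * q = n.choose k * m := by
    have h1 := sum_pairs e (fun _ => (1 : ℕ)) m hmJ
    simp only [smul_eq_mul, mul_one, Finset.sum_const, Finset.card_univ, Fintype.card_prod,
      Fintype.card_perm, Fintype.card_fin] at h1
    rw [← hScn]
    exact h1
  have hid : n * cN = n.choose k * k := by
    have h := Nat.add_one_mul_choose_eq (n - 1) (k - 1)
    rw [Nat.sub_add_cancel hn, Nat.sub_add_cancel hk] at h
    exact h
  have hmc : m * cN = n.factorial := by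
    have h2 : m * cN * n = n.factorial * n := by
      calc m * cN * n = m * (n * cN) := by ring
        _ = m * (n.choose k * k) := by rw [hid]
        _ = (n.choose k * m) * k := by ring
        _ = (n.factorial * q) * k := by rw [← hcount]
        _ = n.factorial * (k * q) := by ring
        _ = n.factorial * n := by rw [← hkq]
    exact Nat.eq_of_mul_eq_mul_right hn h2
  have hm0 : 0 < m := by
    rcases Nat.eq_zero_or_pos m with h | h
    · exfalso; rw [h, zero_mul] at hmc; exact (Nat.factorial_pos n).ne hmc
    · exact h
  have hc0 : 0 < cN := by
    rcases Nat.eq_zero_or_pos cN with h | h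
    · exfalso; rw [h, mul_zero] at hmc; exact (Nat.factorial_pos n).ne hmc
    · exact h
  have hcR : (0 : ℝ) < (cN : ℝ) := by exact_mod_cast hc0
  -- the matrices D σ
  set D : Equiv.Perm (Fin n) → Matrix (Fin n) (Fin n) ℝ :=
    fun σ => ∑ i : Fin q, Matrix.embed (Jset e σ i) (Ystar (Jset e σ i)) with hD
  have hDpd : ∀ σ : Equiv.Perm (Fin n), (D σ).PosDef := by
    intro σ
    rw [hD]
    simp only
    rw [D_block e σ Ystar]
    exact posdef_submatrix_equiv (posdef_blockDiagonal fun i =>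
      posdef_submatrix_equiv (hY _ (card_Jset e σ i)) (uEquiv e σ i)) (σ.symm.trans e)
  have hYdetpos : ∀ (σ : Equiv.Perm (Fin n)) (i : Fin q), 0 < (Ystar (Jset e σ i)).det :=
    fun σ i => (hY _ (card_Jset e σ i)).det_pos
  have hDdet : ∀ σ : Equiv.Perm (Fin n),
      Real.log (D σ).det = ∑ i : Fin q, Real.log (Ystar (Jset e σ i)).det := by
    intro σ
    rw [hD]
    simp only
    rw [D_block e σ Ystar,
      show (fun x => e (σ.symm x)) = ⇑((Equiv.symm σ).trans e) from rfl,
      Matrix.det_submatrix_equiv_self ((Equiv.symm σ).trans e), Matrix.det_blockDiagonal]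
    rw [Real.log_prod (fun i _ => by
      rw [Matrix.det_submatrix_equiv_self]
      exact (hYdetpos σ i).ne')]
    refine Finset.sum_congr rfl fun i _ => ?_
    rw [Matrix.det_submatrix_equiv_self]
  set Ψ : Matrix (Fin n) (Fin n) ℝ := ∑ J ∈ S, Matrix.embed J (Ystar J) with hPsi
  have hsumD : ∑ σ : Equiv.Perm (Fin n), D σ = (m : ℝ) • Ψ := by
    have h1 := sum_pairs e (fun J => Matrix.embed J (Ystar J)) m hmJ
    rw [Fintype.sum_prod_type] at h1
    rw [← hS] at h1
    calc ∑ σ : Equiv.Perm (Fin n), D σ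
        = ∑ J ∈ S, m • Matrix.embed J (Ystar J) := h1
      _ = (m : ℝ) • Ψ := by
          rw [hPsi, Finset.smul_sum]
          refine Finset.sum_congr rfl fun J _ => ?_
          exact (Nat.cast_smul_eq_nsmul ℝ m _).symm
  -- concavity
  set Nf : ℝ := (n.factorial : ℝ) with hNf
  have hNfpos : (0 : ℝ) < Nf := by
    rw [hNf]; exact_mod_cast Nat.factorial_pos n
  have hconc := det_log_concave (univ : Finset (Equiv.Perm (Fin n)))
    (fun _ => Nf⁻¹) D (fun _ _ => inv_pos.mpr hNfpos)
    (by
      rw [Finset.sum_const, Finset.card_univ, Fintype.card_perm, Fintype.card_fin,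
        nsmul_eq_mul, hNf, mul_inv_cancel₀]
      exact_mod_cast (Nat.factorial_pos n).ne')
    (fun σ _ => hDpd σ)
  have hZeq : ∑ σ : Equiv.Perm (Fin n), (fun _ => Nf⁻¹) σ • D σ = ((cN : ℝ))⁻¹ • Ψ := by
    rw [← Finset.smul_sum, hsumD, smul_smul]
    congr 1
    have : (m : ℝ) * (cN : ℝ) = Nf := by
      rw [hNf]; exact_mod_cast hmc
    field_simp
    linarith [this]
  rw [hZeq] at hconc
  set Z : Matrix (Fin n) (Fin n) ℝ := ((cN : ℝ))⁻¹ • Ψ with hZ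
  have hprodpos : 0 < ∏ σ : Equiv.Perm (Fin n), (D σ).det ^ Nf⁻¹ :=
    Finset.prod_pos fun σ _ => Real.rpow_pos_of_pos (hDpd σ).det_pos _
  have hdetZpos : 0 < Z.det := lt_of_lt_of_le hprodpos hconc
  have hlogZ : (Nf)⁻¹ * ∑ σ : Equiv.Perm (Fin n), Real.log (D σ).det ≤ Real.log Z.det := by
    have := Real.log_le_log hprodpos hconc
    rw [Real.log_prod (fun σ _ => (Real.rpow_pos_of_pos (hDpd σ).det_pos _).ne')] at this
    calc Nf⁻¹ * ∑ σ : Equiv.Perm (Fin n), Real.log (D σ).det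
        = ∑ σ : Equiv.Perm (Fin n), Real.log ((D σ).det ^ (Nf)⁻¹) := by
          rw [Finset.mul_sum]
          refine Finset.sum_congr rfl fun σ _ => ?_
          rw [Real.log_rpow (hDpd σ).det_pos]
      _ ≤ Real.log Z.det := this
  have hsumlog : ∑ σ : Equiv.Perm (Fin n), Real.log (D σ).det
      = (m : ℝ) * ∑ J ∈ S, Real.log (Ystar J).det := by
    have h1 := sum_pairs e (fun J => Real.log (Ystar J).det) m hmJ
    rw [Fintype.sum_prod_type] at h1
    rw [← hS] at h1
    calc ∑ σ : Equiv.Perm (Fin n), Real.log (D σ).det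
        = ∑ σ : Equiv.Perm (Fin n), ∑ i : Fin q, Real.log (Ystar (Jset e σ i)).det :=
          Finset.sum_congr rfl fun σ _ => hDdet σ
      _ = ∑ J ∈ S, m • Real.log (Ystar J).det := h1
      _ = (m : ℝ) * ∑ J ∈ S, Real.log (Ystar J).det := by
          rw [Finset.mul_sum]
          exact Finset.sum_congr rfl fun J _ => by rw [nsmul_eq_mul]
  have hkey : ((cN : ℝ))⁻¹ * ∑ J ∈ S, Real.log (Ystar J).det ≤ Real.log Z.det := by
    refine le_trans (le_of_eq ?_) hlogZ
    rw [hsumlog, ← mul_assoc]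
    congr 1
    have hmcR : (m : ℝ) * (cN : ℝ) = Nf := by rw [hNf]; exact_mod_cast hmc
    field_simp
    linarith [hmcR]
  -- determinant of Ψ and Xnext
  have hPsiZ : Ψ = (cN : ℝ) • Z := by
    rw [hZ, smul_smul, mul_inv_cancel₀ hcR.ne', one_smul]
  have hdetPsi : Ψ.det = (cN : ℝ) ^ n * Z.det := by
    rw [hPsiZ, Matrix.det_smul, Fintype.card_fin]
  have hdetPsipos : 0 < Ψ.det := by
    rw [hdetPsi]
    exact mul_pos (pow_pos hcR n) hdetZpos
  have hlogPsi : Real.log Ψ.det = n * Real.log (cN : ℝ) + Real.log Z.det := by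
    rw [hdetPsi, Real.log_mul (pow_pos hcR n).ne' hdetZpos.ne', Real.log_pow]
  have hdetXnext : Xnext.det = Xl.det * Ψ.det := by
    rw [hXnext, det_mul, det_mul]
    have hsq : hXl.posSemidef.sqrt.det * hXl.posSemidef.sqrt.det = Xl.det := by
      rw [← det_mul, hXl.posSemidef.sqrt_mul_self]
    rw [← hsq]; ring
  have hlogXnext : Real.log Xnext.det = Real.log Xl.det + Real.log Ψ.det := by
    rw [hdetXnext, Real.log_mul hXl.det_pos.ne' hdetPsipos.ne']
  -- compute RHS first sum
  have hrhs1 : ∀ J ∈ S, Real.log (((cN : ℝ))⁻¹ • (1 : Matrix ↥J ↥J ℝ)).det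
      = -(k * Real.log (cN : ℝ)) := by
    intro J hJ
    have hJk : J.card = k := (Finset.mem_filter.mp hJ).2
    rw [Matrix.det_smul, Matrix.det_one, mul_one, Fintype.card_coe, hJk,
      Real.log_pow, Real.log_inv]
    ring
  have hScard : (S.card : ℝ) * k = n * (cN : ℝ) := by
    rw [hScn]
    exact_mod_cast hid.symm
  -- final computation
  rw [ge_iff_le, hlogXnext]
  have hJsum : ∑ J ∈ S, Real.log (((cN : ℝ))⁻¹ • (1 : Matrix ↥J ↥J ℝ)).det
      = -(S.card * (k * Real.log (cN : ℝ))) := by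
    rw [Finset.sum_congr rfl hrhs1, Finset.sum_const, nsmul_eq_mul]
    ring
  rw [hJsum]
  have hfin : (cN : ℝ) * Real.log Ψ.det ≥ n * (cN : ℝ) * Real.log (cN : ℝ)
      + ∑ J ∈ S, Real.log (Ystar J).det := by
    rw [hlogPsi, mul_add]
    have h2 : (cN : ℝ) * (((cN : ℝ))⁻¹ * ∑ J ∈ S, Real.log (Ystar J).det)
        = ∑ J ∈ S, Real.log (Ystar J).det := by
      field_simp
    calc n * (cN : ℝ) * Real.log (cN : ℝ) + ∑ J ∈ S, Real.log (Ystar J).det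
        = (cN : ℝ) * (n * Real.log (cN : ℝ))
          + (cN : ℝ) * (((cN : ℝ))⁻¹ * ∑ J ∈ S, Real.log (Ystar J).det) := by
          rw [h2]; ring
      _ ≤ (cN : ℝ) * (n * Real.log (cN : ℝ)) + (cN : ℝ) * Real.log Z.det := by
          exact add_le_add_right (mul_le_mul_of_nonneg_left hkey hcR.le) _
  have hSk : (S.card : ℝ) * (k * Real.log (cN : ℝ)) = n * (cN : ℝ) * Real.log (cN : ℝ) := by
    rw [← mul_assoc, hScard]
  nlinarith [hfin, hSk]
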